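/- arXiv:1903.00380 — 3 statements merged into one kernel-verified Lean document; each statement's English description precedes it below -/
import Mathlib

section
/- If Γ ≅ ℤ^m is a finite-index subgroup of a torsion-free group π, and the abelianization of π has rank m (i.e. π_ab ⊗ ℚ has dimension m as a ℚ-vector space), then π ≅ ℤ^m. -/
open scoped TensorProduct

/-- The old Mathlib definition (removed upstream): a monoid is torsion-free if no
non-identity element has finite order. -/
def Monoid.IsTorsionFree (G : Type*) [Monoid G] : Prop :=
  ∀ g : G, g ≠ 1 → ¬IsOfFinOrder g

instance : Module.Flat ℤ ℚ := IsLocalization.flat ℚ (nonZeroDivisors ℤ)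

lemma stmt0_inj_one_tmul (m : ℕ) :
    Function.Injective (fun x : Fin m → ℤ =>
      ((1:ℚ) ⊗ₜ[ℤ] x : ℚ ⊗[ℤ] (Fin m → ℤ))) := by
  intro x y h
  have h2 := congrArg (TensorProduct.piScalarRight ℤ ℚ ℚ (Fin m)) h
  simp only [TensorProduct.piScalarRight_apply, TensorProduct.piScalarRightHom_tmul] at h2
  funext i
  have := congrFun h2 i
  simpa [zsmul_eq_mul] using this

/-- If `Γ ≅ ℤ^m` is a finite-index subgroup of a torsion-free group `π` and the
rationalized abelianization of `π` has dimension `m`, then `π ≅ ℤ^m`. -/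
theorem stmt_0 (m : ℕ) (π : Type*) [Group π] (hπ : Monoid.IsTorsionFree π)
    (Γ : Subgroup π) [Γ.FiniteIndex]
    (hΓ : Nonempty (Γ ≃* Multiplicative (Fin m → ℤ)))
    (hrank : Module.finrank ℚ (ℚ ⊗[ℤ] Additive (Abelianization π)) = m) :
    Nonempty (π ≃* Multiplicative (Fin m → ℤ)) := by
  classical
  obtain ⟨e⟩ := hΓ
  -- the natural map `π → ℚ ⊗ (Abelianization π)`
  let q : π → ℚ ⊗[ℤ] Additive (Abelianization π) :=
    fun a => (1:ℚ) ⊗ₜ[ℤ] (Additive.ofMul (Abelianization.of a))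
  have hq_mul : ∀ a b : π, q (a * b) = q a + q b := by
    intro a b
    show (1:ℚ) ⊗ₜ[ℤ] (Additive.ofMul (Abelianization.of (a * b))) = _
    rw [map_mul]
    exact TensorProduct.tmul_add _ _ _
  have hq_one : q 1 = 0 := by
    show (1:ℚ) ⊗ₜ[ℤ] (Additive.ofMul (Abelianization.of 1)) = 0
    rw [map_one]
    exact TensorProduct.tmul_zero _ _
  have hq_pow : ∀ (a : π) (n : ℕ), q (a ^ n) = n • q a := by
    intro a n
    induction n with
    | zero => simpa using hq_one
    | succ k ih => rw [pow_succ, hq_mul, ih, succ_nsmul]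
  -- every element of `π` has a positive power lying in `Γ`
  have hpow : ∀ a : π, ∃ n : ℕ, 0 < n ∧ a ^ n ∈ Γ := by
    intro a
    obtain ⟨i, j, hij, hfij⟩ := Finite.exists_ne_map_eq_of_infinite
      (fun n : ℕ => (QuotientGroup.mk (a ^ n) : π ⧸ Γ))
    rcases hij.lt_or_gt with h | h
    · refine ⟨j - i, Nat.sub_pos_of_lt h, ?_⟩
      have := (QuotientGroup.eq (s := Γ)).mp hfij
      have hx : (a ^ i)⁻¹ * a ^ j = a ^ (j - i) := by
        have : a ^ j = a ^ i * a ^ (j - i) := by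
          rw [← pow_add, Nat.add_sub_cancel' h.le]
        rw [this]; group
      rwa [hx] at this
    · refine ⟨i - j, Nat.sub_pos_of_lt h, ?_⟩
      have := (QuotientGroup.eq (s := Γ)).mp hfij.symm
      have hx : (a ^ j)⁻¹ * a ^ i = a ^ (i - j) := by
        have : a ^ i = a ^ j * a ^ (i - j) := by
          rw [← pow_add, Nat.add_sub_cancel' h.le]
        rw [this]; group
      rwa [hx] at this
  -- the linear map `ℤ^m → Additive (Abelianization π)`
  let j0 : (Fin m → ℤ) → Additive (Abelianization π) :=
    fun x => Additive.ofMul (Abelianization.of ((e.symm (Multiplicative.ofAdd x)) : π))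
  have hj0_add : ∀ x y, j0 (x + y) = j0 x + j0 y := by
    intro x y
    show Additive.ofMul (Abelianization.of ((e.symm (Multiplicative.ofAdd (x + y))) : π)) = _
    have : Multiplicative.ofAdd (x + y)
        = Multiplicative.ofAdd x * Multiplicative.ofAdd y := rfl
    rw [this, map_mul, Subgroup.coe_mul, map_mul]
    rfl
  let jhom : (Fin m → ℤ) →+ Additive (Abelianization π) :=
    { toFun := j0
      map_zero' := by
        have : j0 0 + j0 0 = j0 0 + 0 := by rw [← hj0_add, add_zero, add_zero]
        exact (add_left_cancel this)
      map_add' := hj0_add }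
  let φ := jhom.toIntLinearMap.baseChange ℚ
  have hφ_tmul : ∀ (c : ℚ) (x : Fin m → ℤ), φ (c ⊗ₜ[ℤ] x) = c ⊗ₜ[ℤ] j0 x := by
    intro c x
    simp [φ, LinearMap.baseChange_tmul]
    rfl
  -- `φ (1 ⊗ x)` where x comes from `g ^ n ∈ Γ`
  have hφ_of_mem : ∀ (g : π) (hg : g ∈ Γ),
      φ ((1:ℚ) ⊗ₜ[ℤ] (Multiplicative.toAdd (e ⟨g, hg⟩))) = q g := by
    intro g hg
    rw [hφ_tmul]
    show (1:ℚ) ⊗ₜ[ℤ]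
      (Additive.ofMul (Abelianization.of
        ((e.symm (Multiplicative.ofAdd (Multiplicative.toAdd (e ⟨g, hg⟩)))) : π))) = q g
    norm_num
    rfl
  -- surjectivity of φ
  have hsurj : Function.Surjective φ := by
    rw [← LinearMap.range_eq_top, eq_top_iff]
    rintro z -
    induction z using TensorProduct.induction_on with
    | zero => exact zero_mem _
    | add u v hu hv => exact add_mem hu hv
    | tmul c a =>
      obtain ⟨g, rfl⟩ : ∃ g : π, Additive.ofMul (Abelianization.of g) = a := by
        obtain ⟨g, hg⟩ := Quotient.exists_rep (Additive.toMul a)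
        exact ⟨g, by rw [show Abelianization.of g = Additive.toMul a from hg]; rfl⟩
      obtain ⟨n, hn, hmem⟩ := hpow g
      refine ⟨(c / (n:ℚ)) • ((1:ℚ) ⊗ₜ[ℤ] (Multiplicative.toAdd (e ⟨g ^ n, hmem⟩))), ?_⟩
      rw [map_smul, hφ_of_mem, hq_pow]
      have hc : ((n:ℚ)) ≠ 0 := by exact_mod_cast hn.ne'
      rw [← Nat.cast_smul_eq_nsmul ℚ, smul_smul, div_mul_cancel₀ _ hc]
      show c • ((1:ℚ) ⊗ₜ[ℤ] _) = _
      rw [TensorProduct.smul_tmul', smul_eq_mul, mul_one]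
  -- dimension count: φ is injective
  have hfin : Module.finrank ℚ (ℚ ⊗[ℤ] (Fin m → ℤ)) = m := by
    rw [Module.finrank_baseChange]
    simp
  haveI : Module.Finite ℚ (ℚ ⊗[ℤ] (Fin m → ℤ)) := inferInstance
  haveI : Module.Finite ℚ (ℚ ⊗[ℤ] Additive (Abelianization π)) :=
    Module.Finite.of_surjective φ hsurj
  have hinjφ : Function.Injective φ := by
    rw [← LinearMap.ker_eq_bot, ← Submodule.finrank_eq_zero]
    have h1 := LinearMap.finrank_range_add_finrank_ker φ
    rw [LinearMap.range_eq_top.mpr hsurj, finrank_top, hrank, hfin] at h1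
    omega
  -- injectivity of x ↦ 1 ⊗ x composed with φ gives: q has trivial kernel
  have hqker : ∀ a : π, q a = 0 → a = 1 := by
    intro a ha
    obtain ⟨n, hn, hmem⟩ := hpow a
    have h0 : φ ((1:ℚ) ⊗ₜ[ℤ] (Multiplicative.toAdd (e ⟨a ^ n, hmem⟩))) = φ ((1:ℚ) ⊗ₜ[ℤ] (0 : Fin m → ℤ)) := by
      rw [hφ_of_mem, hq_pow, ha, smul_zero, TensorProduct.tmul_zero, map_zero]
    have h1 := stmt0_inj_one_tmul m (hinjφ h0)
    have h2 : e ⟨a ^ n, hmem⟩ = 1 := by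
      have : Multiplicative.toAdd (e ⟨a ^ n, hmem⟩) = (0 : Fin m → ℤ) := h1
      simpa [← toAdd_one] using this
    have h3 : a ^ n = 1 := by
      have := congrArg (fun z => ((e.symm z : Γ) : π)) h2
      simpa using this
    by_contra hne
    exact hπ a hne (isOfFinOrder_iff_pow_eq_one.mpr ⟨n, hn, h3⟩)
  have hq_inv : ∀ a : π, q a⁻¹ = - q a := by
    intro a
    have := hq_mul a a⁻¹
    rw [mul_inv_cancel, hq_one] at this
    exact (neg_eq_of_add_eq_zero_right this.symm).symm
  have hqinj : Function.Injective q := by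
    intro a b hab
    have : q (a * b⁻¹) = 0 := by rw [hq_mul, hq_inv, hab, add_neg_cancel]
    exact mul_inv_eq_one.mp (hqker _ this)
  -- π is commutative
  have hcomm : ∀ a b : π, a * b = b * a := fun a b => hqinj (by rw [hq_mul, hq_mul, add_comm])
  letI : CommGroup π := { ‹Group π› with mul_comm := hcomm }
  -- `π` is finitely generated
  haveI hfgΓ : Group.FG Γ := by
    have h1 : AddGroup.FG (Fin m → ℤ) := Module.Finite.iff_addGroup_fg.mp inferInstance
    haveI : Group.FG (Multiplicative (Fin m → ℤ)) := AddGroup.fg_iff_mul_fg.mp h1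
    exact Group.fg_of_surjective (f := e.symm.toMonoidHom) e.symm.surjective
  haveI hfgπ : Group.FG π := by
    obtain ⟨S, hS⟩ := (Group.fg_iff_subgroup_fg Γ).mp hfgΓ
    rw [Group.fg_iff]
    refine ⟨↑S ∪ Set.range (fun c : π ⧸ Γ => c.out), ?_,
      (S.finite_toSet.union (Set.finite_range _))⟩
    rw [eq_top_iff]
    intro g _
    have h1 : (QuotientGroup.mk g : π ⧸ Γ).out⁻¹ * g ∈ Γ := by
      rw [← QuotientGroup.eq, QuotientGroup.out_eq']
    have h2 : (QuotientGroup.mk g : π ⧸ Γ).out ∈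
        Subgroup.closure (↑S ∪ Set.range (fun c : π ⧸ Γ => c.out)) :=
      Subgroup.subset_closure (Or.inr ⟨_, rfl⟩)
    have h3 : (QuotientGroup.mk g : π ⧸ Γ).out⁻¹ * g ∈
        Subgroup.closure (↑S ∪ Set.range (fun c : π ⧸ Γ => c.out)) := by
      have hle : Γ ≤ Subgroup.closure (↑S ∪ Set.range (fun c : π ⧸ Γ => c.out)) := by
        rw [← hS]
        exact Subgroup.closure_mono Set.subset_union_left
      exact hle h1
    simpa using mul_mem h2 h3
  haveI : Module.Finite ℤ (Additive π) :=
    Module.Finite.iff_addGroup_fg.mpr (AddGroup.fg_of_group_fg)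
  haveI : NoZeroSMulDivisors ℤ (Additive π) := by
    refine ⟨fun {n x} h => ?_⟩
    by_cases hn : n = 0
    · exact Or.inl hn
    · refine Or.inr ?_
      by_contra hx
      refine hπ (Additive.toMul x) (fun hx1 => hx ?_) ?_
      · simpa using hx1
      · refine isOfFinOrder_iff_zpow_eq_one.mpr ⟨n, hn, ?_⟩
        rw [← toMul_zsmul, h]
        rfl
  haveI : Module.Free ℤ (Additive π) := Module.free_of_finite_type_torsion_free'
  -- the rank of `π` is `m`
  have hab : Module.finrank ℤ (Additive π) = m := by
    let ab : Abelianization π ≃* π := Abelianization.equivOfComm.symm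
    let abA : Additive (Abelianization π) ≃+ Additive π :=
      { toFun := fun x => Additive.ofMul (ab (Additive.toMul x))
        invFun := fun x => Additive.ofMul (ab.symm (Additive.toMul x))
        left_inv := fun x => by simp
        right_inv := fun x => by simp
        map_add' := fun x y => by
          show Additive.ofMul (ab (Additive.toMul (x + y))) = _
          rw [toMul_add, map_mul]
          rfl }
    let abQ := abA.toIntLinearEquiv.baseChange (A := ℚ)
    rw [← Module.finrank_baseChange (R := ℚ) (M' := Additive π)]
    rw [← LinearEquiv.finrank_eq abQ, hrank]
  let b : Module.Basis (Fin m) ℤ (Additive π) := Module.finBasisOfFinrankEq ℤ (Additive π) hab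
  let ℓ : Additive π ≃ₗ[ℤ] (Fin m → ℤ) := b.equivFun
  exact ⟨{ toFun := fun g => Multiplicative.ofAdd (ℓ (Additive.ofMul g))
           invFun := fun x => Additive.toMul (ℓ.symm (Multiplicative.toAdd x))
           left_inv := fun g => by simp
           right_inv := fun x => by simp
           map_mul' := fun a b => by
             show Multiplicative.ofAdd (ℓ (Additive.ofMul (a * b))) = _
             rw [show Additive.ofMul (a * b) = Additive.ofMul a + Additive.ofMul b from rfl,
               map_add]
             rfl }⟩
end

section
/- In the exterior algebra Λ(v₁,…,v_n) over ℚ on generators of degree 1, equipped with a differential d satisfying d(v_j) ∈ Λ²(v₁,…,v_{j−1}) (a nilmanifold minimal model), the top word c = v₁v₂⋯v_n is a cocycle, and c is not a coboundary. -/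
open ExteriorAlgebra

namespace Stmt8Aux

variable {n : ℕ}

noncomputable def g (i : Fin n) : ExteriorAlgebra ℚ (Fin n → ℚ) := ι ℚ (Pi.single i 1)

noncomputable def W (l : List (Fin n)) : ExteriorAlgebra ℚ (Fin n → ℚ) := (l.map g).prod

lemma W_nil : W ([] : List (Fin n)) = 1 := rfl

lemma W_cons (i : Fin n) (l : List (Fin n)) : W (i :: l) = g i * W l := by
  simp [W]

lemma W_append (l₁ l₂ : List (Fin n)) : W (l₁ ++ l₂) = W l₁ * W l₂ := by
  simp [W]

lemma W_singleton (i : Fin n) : W [i] = g i := by simp [W]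

lemma W_ofFn {m : ℕ} (v : Fin m → Fin n) :
    W (List.ofFn v) = ιMulti ℚ m (fun t => Pi.single (v t) (1 : ℚ)) := by
  rw [ιMulti_apply, W, List.map_ofFn]
  rfl

lemma W_eq_zero_of_not_nodup (l : List (Fin n)) (h : ¬ l.Nodup) : W l = 0 := by
  have : W l = ιMulti ℚ l.length (fun t => Pi.single (l.get t) (1 : ℚ)) := by
    rw [ιMulti_apply, W]
    congr 1
    rw [← List.ofFn_getElem_eq_map l g]
    rfl
  rw [List.nodup_iff_injective_get] at h
  simp only [Function.Injective, not_forall] at h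
  obtain ⟨p, q, hpq, hne⟩ := h
  rw [this]
  exact AlternatingMap.map_eq_zero_of_eq _ _ (by rw [hpq]) hne

section Main

variable (d : Module.End ℚ (ExteriorAlgebra ℚ (Fin n → ℚ)))
    (hLeib : ∀ (p : ℕ) (a b : ExteriorAlgebra ℚ (Fin n → ℚ)),
      a ∈ (LinearMap.range (ι ℚ :
        (Fin n → ℚ) →ₗ[ℚ] ExteriorAlgebra ℚ (Fin n → ℚ)) ^ p : Submodule ℚ _) →
      d (a * b) = d a * b + ((-1 : ℚ) ^ p) • (a * d b))
    (htri : ∀ j : Fin n, d (ι ℚ (Pi.single j (1 : ℚ))) ∈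
      ((Submodule.span ℚ {x : ExteriorAlgebra ℚ (Fin n → ℚ) |
          ∃ i : Fin n, i < j ∧ x = ι ℚ (Pi.single i (1 : ℚ))}) ^ 2 : Submodule ℚ _))

include hLeib in
lemma d_one : d 1 = 0 := by
  have h1 : (1 : ExteriorAlgebra ℚ (Fin n → ℚ)) ∈
      (LinearMap.range (ι ℚ : (Fin n → ℚ) →ₗ[ℚ] ExteriorAlgebra ℚ (Fin n → ℚ)) ^ 0 :
        Submodule ℚ _) := by
    rw [pow_zero, Submodule.one_eq_span]
    exact Submodule.subset_span rfl
  have := hLeib 0 1 1 h1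
  simp only [mul_one, one_mul, pow_zero, one_smul] at this
  -- d 1 = d 1 + d 1
  exact (left_eq_add.mp this)

include hLeib htri in
lemma main (l : List (Fin n)) (hnd : l.Nodup) (hlen : n ≤ l.length + 1) :
    d (W l) = 0 := by
  have key : ∀ suf pre : List (Fin n), pre ++ suf = l → W pre * d (W suf) = 0 := by
    intro suf
    induction suf with
    | nil =>
      intro pre _
      rw [W_nil, d_one d hLeib, mul_zero]
    | cons i rest ih =>
      intro pre hpre
      rw [W_cons, hLeib 1 (g i) (W rest)
        (by rw [pow_one]; exact LinearMap.mem_range_self _ _), mul_add]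
      have h2 : W pre * ((-1 : ℚ) ^ 1 • (g i * d (W rest))) = 0 := by
        have hih := ih (pre ++ [i]) (by simpa using hpre)
        rw [W_append, W_singleton] at hih
        rw [mul_smul_comm, ← mul_assoc, hih, smul_zero]
      rw [h2, add_zero]
      -- now the quadratic term
      -- key combinatorial fact
      have hcomb : ∀ a b : Fin n, a < i → b < i →
          W pre * (g a * (g b * W rest)) = 0 := by
        intro a b ha hb
        have : W pre * (g a * (g b * W rest)) = W (pre ++ a :: b :: rest) := by
          rw [W_append, W_cons, W_cons]
        rw [this]
        apply W_eq_zero_of_not_nodup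
        intro hnd2
        -- i is not in pre ++ a :: b :: rest
        have hi : i ∉ pre ++ a :: b :: rest := by
          rw [← hpre] at hnd
          rw [List.nodup_append] at hnd
          obtain ⟨hp, hir, hdisj⟩ := hnd
          rw [List.nodup_cons] at hir
          simp only [List.mem_append, List.mem_cons, not_or]
          refine ⟨fun him => hdisj i him i List.mem_cons_self rfl, ha.ne', hb.ne', hir.1⟩
        -- cardinality contradiction
        have hcard : (insert i (pre ++ a :: b :: rest).toFinset).card ≤ n := by
          calc (insert i (pre ++ a :: b :: rest).toFinset).card
              ≤ (Finset.univ : Finset (Fin n)).card := Finset.card_le_univ _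
            _ = n := by simp
        rw [Finset.card_insert_of_notMem (by simp only [List.mem_toFinset]; exact hi),
          List.toFinset_card_of_nodup hnd2] at hcard
        have hlen2 : (pre ++ a :: b :: rest).length = l.length + 1 := by
          rw [← hpre]; simp; omega
        omega
      have hq : ∀ q ∈ ((Submodule.span ℚ {x : ExteriorAlgebra ℚ (Fin n → ℚ) |
            ∃ a : Fin n, a < i ∧ x = ι ℚ (Pi.single a (1 : ℚ))}) ^ 2 : Submodule ℚ _),
          W pre * (q * W rest) = 0 := by
        intro q hqmem
        rw [pow_two] at hqmem
        refine Submodule.mul_induction_on hqmem ?_ ?_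
        · intro x hx y hy
          induction hx using Submodule.span_induction with
          | mem x hxm =>
            induction hy using Submodule.span_induction with
            | mem y hym =>
              obtain ⟨a, ha, rfl⟩ := hxm
              obtain ⟨b, hb, rfl⟩ := hym
              rw [mul_assoc]
              exact hcomb a b ha hb
            | zero => simp
            | add y z _ _ hy hz => rw [mul_add, add_mul, mul_add, hy, hz, add_zero]
            | smul r y _ hy => rw [mul_smul_comm, smul_mul_assoc, mul_smul_comm, hy, smul_zero]
          | zero => simp
          | add x z _ _ hx2 hz2 => rw [add_mul, add_mul, mul_add, hx2, hz2, add_zero]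
          | smul r x _ hx2 => rw [smul_mul_assoc, smul_mul_assoc, mul_smul_comm, hx2, smul_zero]
        · intro x y hx hy
          rw [add_mul, mul_add, hx, hy, add_zero]
      exact hq _ (htri i)
  have := key l [] rfl
  rwa [W_nil, one_mul] at this

end Main

/-- the functional: coefficient of the top word. -/
noncomputable def F (n : ℕ) : ∀ i : ℕ, (Fin n → ℚ) [⋀^Fin i]→ₗ[ℚ] ℚ :=
  fun i => if h : i = n then
    (Matrix.detRowAlternating : (Fin n → ℚ) [⋀^Fin n]→ₗ[ℚ] ℚ).domDomCongr (finCongr h.symm)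
  else 0

noncomputable def φ (n : ℕ) : ExteriorAlgebra ℚ (Fin n → ℚ) →ₗ[ℚ] ℚ :=
  liftAlternating (F n)

lemma φ_ιMulti {j : ℕ} (v : Fin j → (Fin n → ℚ)) :
    φ n (ιMulti ℚ j v) = F n j v := liftAlternating_apply_ιMulti _ _

lemma F_ne (j : ℕ) (h : j ≠ n) : F n j = 0 := dif_neg h

lemma φ_top : φ n (ιMulti ℚ n (fun i => Pi.single i (1 : ℚ))) = 1 := by
  rw [φ_ιMulti]
  have : F n n = (Matrix.detRowAlternating : (Fin n → ℚ) [⋀^Fin n]→ₗ[ℚ] ℚ) := by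
    rw [F, dif_pos rfl]
    rfl
  rw [this]
  have : (fun i => Pi.single i (1 : ℚ)) = (1 : Matrix (Fin n) (Fin n) ℚ) := by
    ext i j
    rw [Matrix.one_eq_pi_single]
  show Matrix.det (Matrix.of fun i => Pi.single i (1:ℚ)) = 1
  rw [show (Matrix.of fun i => Pi.single i (1:ℚ)) = (1 : Matrix (Fin n) (Fin n) ℚ) from this,
    Matrix.det_one]

lemma φ_vanish_ne (m : ℕ) (hm : m ≠ n)
    (y : ExteriorAlgebra ℚ (Fin n → ℚ))
    (hy : y ∈ (LinearMap.range (ι ℚ :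
      (Fin n → ℚ) →ₗ[ℚ] ExteriorAlgebra ℚ (Fin n → ℚ)) ^ m : Submodule ℚ _)) :
    φ n y = 0 := by
  have hy' : y ∈ ⋀[ℚ]^m (Fin n → ℚ) := hy
  rw [← ιMulti_span_fixedDegree] at hy'
  clear hy
  induction hy' using Submodule.span_induction with
  | mem y hym =>
    obtain ⟨v, rfl⟩ := hym
    rw [φ_ιMulti, F_ne m hm]
    rfl
  | zero => simp
  | add y z _ _ hy hz => rw [map_add, hy, hz, add_zero]
  | smul r y _ hy => rw [map_smul, hy, smul_zero]

end Stmt8Aux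

open Stmt8Aux

/-- In the exterior algebra `Λ(v₁,…,v_n)` on degree-one generators with a differential
`d` (graded Leibniz rule, `d² = 0`, raising word length by one) such that each
`d(v_j)` is quadratic in earlier generators, the top word `c = v₁⋯v_n` is a cocycle
and not a coboundary. -/
theorem stmt_8 (n : ℕ) (hn : 0 < n)
    (d : Module.End ℚ (ExteriorAlgebra ℚ (Fin n → ℚ)))
    (hd2 : ∀ a, d (d a) = 0)
    (hdeg : ∀ (j : ℕ), ∀ a ∈ (LinearMap.range (ι ℚ :
        (Fin n → ℚ) →ₗ[ℚ] ExteriorAlgebra ℚ (Fin n → ℚ)) ^ j : Submodule ℚ _),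
      d a ∈ (LinearMap.range (ι ℚ :
        (Fin n → ℚ) →ₗ[ℚ] ExteriorAlgebra ℚ (Fin n → ℚ)) ^ (j + 1) : Submodule ℚ _))
    (hLeib : ∀ (p : ℕ) (a b : ExteriorAlgebra ℚ (Fin n → ℚ)),
      a ∈ (LinearMap.range (ι ℚ :
        (Fin n → ℚ) →ₗ[ℚ] ExteriorAlgebra ℚ (Fin n → ℚ)) ^ p : Submodule ℚ _) →
      d (a * b) = d a * b + ((-1 : ℚ) ^ p) • (a * d b))
    (htri : ∀ j : Fin n, d (ι ℚ (Pi.single j (1 : ℚ))) ∈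
      ((Submodule.span ℚ {x : ExteriorAlgebra ℚ (Fin n → ℚ) |
          ∃ i : Fin n, i < j ∧ x = ι ℚ (Pi.single i (1 : ℚ))}) ^ 2 : Submodule ℚ _)) :
    d ((List.ofFn fun i : Fin n => ι ℚ (Pi.single i (1 : ℚ))).prod) = 0 ∧
      ¬ ∃ a, d a = (List.ofFn fun i : Fin n => ι ℚ (Pi.single i (1 : ℚ))).prod := by
  have hc : (List.ofFn fun i : Fin n => ι ℚ (Pi.single i (1 : ℚ))).prod
      = W (List.finRange n) := by
    rw [W, ← List.ofFn_id, List.map_ofFn]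
    rfl
  constructor
  · rw [hc]
    exact main d hLeib htri (List.finRange n) (List.nodup_finRange n) (by simp)
  · rintro ⟨a, ha⟩
    have hφd : ∀ x, φ n (d x) = 0 := by
      intro x
      have hx : x ∈ Submodule.span ℚ (Set.range fun x :
          Σ j, (Fin j → (Fin n → ℚ)) => ιMulti ℚ x.1 x.2) := by
        rw [ιMulti_span]; exact Submodule.mem_top
      induction hx using Submodule.span_induction with
      | mem x hxm =>
        obtain ⟨⟨j, v⟩, rfl⟩ := hxm
        by_cases hj : j + 1 = n
        · have hzero : ∀ v : Fin j → (Fin n → ℚ), d (ιMulti ℚ j v) = 0 := by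
            have hext : d.compMultilinearMap (ιMulti ℚ j).toMultilinearMap = 0 := by
              apply Module.Basis.ext_multilinear (fun _ => Pi.basisFun ℚ (Fin n))
              intro v
              simp only [LinearMap.compMultilinearMap_apply, MultilinearMap.zero_apply,
                Pi.basisFun_apply, AlternatingMap.coe_multilinearMap]
              have hW : ιMulti ℚ j (fun t => Pi.single (v t) (1 : ℚ))
                  = W (List.ofFn v) := (W_ofFn v).symm
              rw [hW]
              by_cases hv : Function.Injective v
              · exact main d hLeib htri (List.ofFn v) (List.nodup_ofFn.mpr hv)
                  (by simp; omega)
              · rw [W_eq_zero_of_not_nodup _ (by rw [List.nodup_ofFn]; exact hv), map_zero]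
            intro w
            exact MultilinearMap.ext_iff.mp hext w
          rw [hzero v, map_zero]
        · exact φ_vanish_ne (j + 1) hj _
            (hdeg j _ (ιMulti_range ℚ j (Set.mem_range_self v)))
      | zero => simp
      | add y z _ _ hy hz => rw [map_add, map_add, hy, hz, add_zero]
      | smul r y _ hy => rw [map_smul, map_smul, hy, smul_zero]
    have h1 : φ n ((List.ofFn fun i : Fin n => ι ℚ (Pi.single i (1 : ℚ))).prod) = 1 := by
      rw [← ιMulti_apply]
      exact φ_top
    rw [← ha, hφd a] at h1
    exact zero_ne_one h1
end

section
/- Let H = ℚ[a,b,α,β]/(a², b², α², β², aα, aβ, bα, bβ, ab − αβ) with all generators in degree 2 (the cohomology of (S²×S²)#(S²×S²)). The linear map on generators θ(a) = −α, θ(b) = 0, θ(α) = 0, θ(β) = b extends to a well-defined degree-zero derivation of H, and this derivation is nilpotent and nonzero. -/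
set_option maxRecDepth 4000

/-- The defining ideal of `H^*((S²×S²) # (S²×S²); ℚ) = ℚ[a,b,α,β]/(a², b², α², β²,
aα, aβ, bα, bβ, ab − αβ)`, with `a = X 0`, `b = X 1`, `α = X 2`, `β = X 3` (all of
degree 2, hence commuting). -/
noncomputable def connSumIdeal : Ideal (MvPolynomial (Fin 4) ℚ) :=
  Ideal.span {MvPolynomial.X 0 ^ 2, MvPolynomial.X 1 ^ 2, MvPolynomial.X 2 ^ 2,
    MvPolynomial.X 3 ^ 2, MvPolynomial.X 0 * MvPolynomial.X 2,
    MvPolynomial.X 0 * MvPolynomial.X 3, MvPolynomial.X 1 * MvPolynomial.X 2,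
    MvPolynomial.X 1 * MvPolynomial.X 3,
    MvPolynomial.X 0 * MvPolynomial.X 1 - MvPolynomial.X 2 * MvPolynomial.X 3}

open MvPolynomial

noncomputable def connDer : Derivation ℚ (MvPolynomial (Fin 4) ℚ) (MvPolynomial (Fin 4) ℚ) :=
  MvPolynomial.mkDerivation ℚ ![-(X 2), 0, 0, X 1]

lemma connDer_X0 : connDer (X 0) = -(X 2) := by simp [connDer, MvPolynomial.mkDerivation_X]
lemma connDer_X1 : connDer (X 1) = 0 := by simp [connDer, MvPolynomial.mkDerivation_X]
lemma connDer_X2 : connDer (X 2) = 0 := by simp [connDer, MvPolynomial.mkDerivation_X]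
lemma connDer_X3 : connDer (X 3) = X 1 := by simp [connDer, MvPolynomial.mkDerivation_X]

lemma connDer_mul (p q : MvPolynomial (Fin 4) ℚ) :
    connDer (p * q) = p * connDer q + q * connDer p := by
  rw [Derivation.leibniz, smul_eq_mul, smul_eq_mul]

-- generator memberships
lemma gmem0 : (X 0 ^ 2 : MvPolynomial (Fin 4) ℚ) ∈ connSumIdeal := Ideal.subset_span (by simp)
lemma gmem1 : (X 1 ^ 2 : MvPolynomial (Fin 4) ℚ) ∈ connSumIdeal := Ideal.subset_span (by simp)
lemma gmem2 : (X 2 ^ 2 : MvPolynomial (Fin 4) ℚ) ∈ connSumIdeal := Ideal.subset_span (by simp)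
lemma gmem3 : (X 3 ^ 2 : MvPolynomial (Fin 4) ℚ) ∈ connSumIdeal := Ideal.subset_span (by simp)
lemma gmem02 : (X 0 * X 2 : MvPolynomial (Fin 4) ℚ) ∈ connSumIdeal := Ideal.subset_span (by simp)
lemma gmem03 : (X 0 * X 3 : MvPolynomial (Fin 4) ℚ) ∈ connSumIdeal := Ideal.subset_span (by simp)
lemma gmem12 : (X 1 * X 2 : MvPolynomial (Fin 4) ℚ) ∈ connSumIdeal := Ideal.subset_span (by simp)
lemma gmem13 : (X 1 * X 3 : MvPolynomial (Fin 4) ℚ) ∈ connSumIdeal := Ideal.subset_span (by simp)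
lemma gmem01 : (X 0 * X 1 - X 2 * X 3 : MvPolynomial (Fin 4) ℚ) ∈ connSumIdeal :=
  Ideal.subset_span (by simp)

noncomputable def smallIdeal : Ideal (MvPolynomial (Fin 4) ℚ) := Ideal.span {X 1, X 2}

lemma connDer_mem_small (p : MvPolynomial (Fin 4) ℚ) : connDer p ∈ smallIdeal := by
  induction p using MvPolynomial.induction_on with
  | C a => rw [MvPolynomial.derivation_C]; exact zero_mem _
  | add p q hp hq => rw [map_add]; exact add_mem hp hq
  | mul_X p n hp =>
    rw [connDer_mul]
    refine add_mem ?_ (Ideal.mul_mem_left _ _ hp)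
    refine Ideal.mul_mem_left _ _ ?_
    fin_cases n
    · show connDer (X 0) ∈ smallIdeal
      rw [connDer_X0]; exact neg_mem (Ideal.subset_span (by simp))
    · show connDer (X 1) ∈ smallIdeal
      rw [connDer_X1]; exact zero_mem _
    · show connDer (X 2) ∈ smallIdeal
      rw [connDer_X2]; exact zero_mem _
    · show connDer (X 3) ∈ smallIdeal
      rw [connDer_X3]; exact Ideal.subset_span (by simp)

lemma small_mul_small {x y : MvPolynomial (Fin 4) ℚ} (hx : x ∈ smallIdeal)
    (hy : y ∈ smallIdeal) : x * y ∈ connSumIdeal := by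
  rw [smallIdeal, Ideal.mem_span_pair] at hx hy
  obtain ⟨a, b, rfl⟩ := hx
  obtain ⟨c, d, rfl⟩ := hy
  have : (a * X 1 + b * X 2) * (c * X 1 + d * X 2) =
      (a * c) * X 1 ^ 2 + (a * d + b * c) * (X 1 * X 2) + (b * d) * X 2 ^ 2 := by ring
  rw [this]
  exact add_mem (add_mem (Ideal.mul_mem_left _ _ gmem1) (Ideal.mul_mem_left _ _ gmem12))
    (Ideal.mul_mem_left _ _ gmem2)

lemma connDer_connDer_mem (p : MvPolynomial (Fin 4) ℚ) :
    connDer (connDer p) ∈ connSumIdeal := by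
  induction p using MvPolynomial.induction_on with
  | C a => rw [MvPolynomial.derivation_C, map_zero]; exact zero_mem _
  | add p q hp hq => rw [map_add, map_add]; exact add_mem hp hq
  | mul_X p n hp =>
    have hXn : connDer (connDer (X n)) = 0 := by
      fin_cases n
      · show connDer (connDer (X 0)) = 0
        rw [connDer_X0, map_neg, connDer_X2, neg_zero]
      · show connDer (connDer (X 1)) = 0
        rw [connDer_X1, map_zero]
      · show connDer (connDer (X 2)) = 0
        rw [connDer_X2, map_zero]
      · show connDer (connDer (X 3)) = 0
        rw [connDer_X3, connDer_X1]
    rw [connDer_mul, map_add, connDer_mul, connDer_mul, hXn, mul_zero, zero_add]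
    refine add_mem ?_ (add_mem ?_ ?_)
    · exact small_mul_small (connDer_mem_small _) (connDer_mem_small _)
    · exact Ideal.mul_mem_left _ _ hp
    · exact small_mul_small (connDer_mem_small _) (connDer_mem_small _)

lemma connDer_ideal {p : MvPolynomial (Fin 4) ℚ} (hp : p ∈ connSumIdeal) :
    connDer p ∈ connSumIdeal := by
  refine Submodule.span_induction ?_ ?_ ?_ ?_ hp
  · rintro x hx
    simp only [Set.mem_insert_iff, Set.mem_singleton_iff] at hx
    rcases hx with rfl | rfl | rfl | rfl | rfl | rfl | rfl | rfl | rfl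
    · rw [sq, connDer_mul, connDer_X0]
      have : X 0 * -X 2 + X 0 * -X 2 = (-2 : MvPolynomial (Fin 4) ℚ) * (X 0 * X 2) := by ring
      rw [this]; exact Ideal.mul_mem_left _ _ gmem02
    · rw [sq, connDer_mul, connDer_X1]; simpa using zero_mem connSumIdeal
    · rw [sq, connDer_mul, connDer_X2]; simpa using zero_mem connSumIdeal
    · rw [sq, connDer_mul, connDer_X3]
      have : X 3 * X 1 + X 3 * X 1 = (2 : MvPolynomial (Fin 4) ℚ) * (X 1 * X 3) := by ring
      rw [this]; exact Ideal.mul_mem_left _ _ gmem13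
    · rw [connDer_mul, connDer_X0, connDer_X2, mul_zero, zero_add]
      have : X 2 * -X 2 = (-1 : MvPolynomial (Fin 4) ℚ) * X 2 ^ 2 := by ring
      rw [this]; exact Ideal.mul_mem_left _ _ gmem2
    · rw [connDer_mul, connDer_X0, connDer_X3]
      have : X 0 * X 1 + X 3 * -X 2 =
          (X 0 * X 1 - X 2 * X 3 : MvPolynomial (Fin 4) ℚ) := by ring
      rw [this]; exact gmem01
    · rw [connDer_mul, connDer_X1, connDer_X2]; simpa using zero_mem connSumIdeal
    · rw [connDer_mul, connDer_X1, connDer_X3, mul_zero, add_zero]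
      have : X 1 * X 1 = (X 1 : MvPolynomial (Fin 4) ℚ) ^ 2 := by ring
      rw [this]; exact gmem1
    · rw [map_sub, connDer_mul, connDer_mul, connDer_X0, connDer_X1, connDer_X2, connDer_X3]
      have : (X 0 * 0 + X 1 * -X 2) - (X 2 * X 1 + X 3 * 0) =
          (-2 : MvPolynomial (Fin 4) ℚ) * (X 1 * X 2) := by ring
      rw [this]; exact Ideal.mul_mem_left _ _ gmem12
  · rw [map_zero]; exact zero_mem _
  · intro x y _ _ hx hy; rw [map_add]; exact add_mem hx hy
  · intro a x hxI hx
    rw [smul_eq_mul, connDer_mul]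
    exact add_mem (Ideal.mul_mem_left _ _ hx) (Ideal.mul_mem_right _ _ hxI)

noncomputable def connPhi : MvPolynomial (Fin 4) ℚ →ₐ[ℚ] DualNumber ℚ :=
  MvPolynomial.aeval (fun i : Fin 4 => if i = 1 then DualNumber.eps else 0)

lemma connPhi_X1 : connPhi (X 1) = DualNumber.eps := by
  rw [connPhi, MvPolynomial.aeval_X, if_pos rfl]

lemma eps_ne_zero' : (DualNumber.eps : DualNumber ℚ) ≠ 0 := by
  intro h
  have h2 := congrArg TrivSqZeroExt.snd h
  rw [TrivSqZeroExt.snd_zero] at h2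
  rw [show TrivSqZeroExt.snd (DualNumber.eps : DualNumber ℚ) = 1 from
    TrivSqZeroExt.snd_inr ℚ 1] at h2
  exact one_ne_zero h2

lemma X1_notMem : (X 1 : MvPolynomial (Fin 4) ℚ) ∉ connSumIdeal := by
  intro h
  have hker : connSumIdeal ≤ RingHom.ker (connPhi : MvPolynomial (Fin 4) ℚ →+* DualNumber ℚ) := by
    rw [connSumIdeal, Ideal.span_le]
    rintro g hg
    simp only [Set.mem_insert_iff, Set.mem_singleton_iff] at hg
    rcases hg with rfl | rfl | rfl | rfl | rfl | rfl | rfl | rfl | rfl <;>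
      simp [RingHom.mem_ker, connPhi, sq, DualNumber.eps_mul_eps]
  have := hker h
  rw [RingHom.mem_ker] at this
  rw [show (connPhi : MvPolynomial (Fin 4) ℚ →+* DualNumber ℚ) (X 1) = connPhi (X 1) from rfl,
    connPhi_X1] at this
  exact eps_ne_zero' this

noncomputable def thetaFun (x : MvPolynomial (Fin 4) ℚ ⧸ connSumIdeal) :
    MvPolynomial (Fin 4) ℚ ⧸ connSumIdeal :=
  Ideal.Quotient.mk connSumIdeal (connDer (Quotient.out x))

lemma thetaFun_mk (p : MvPolynomial (Fin 4) ℚ) :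
    thetaFun (Ideal.Quotient.mk connSumIdeal p) = Ideal.Quotient.mk connSumIdeal (connDer p) := by
  have h1 : Ideal.Quotient.mk connSumIdeal
      (Quotient.out (Ideal.Quotient.mk connSumIdeal p)) =
      Ideal.Quotient.mk connSumIdeal p := Quotient.out_eq _
  rw [Ideal.Quotient.eq] at h1
  rw [thetaFun, Ideal.Quotient.eq, ← map_sub]
  exact connDer_ideal h1

lemma mk_smul (c : ℚ) (p : MvPolynomial (Fin 4) ℚ) :
    Ideal.Quotient.mk connSumIdeal (c • p) = c • Ideal.Quotient.mk connSumIdeal p := by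
  have := map_smul (Ideal.Quotient.mkₐ ℚ connSumIdeal) c p
  rwa [Ideal.Quotient.mkₐ_eq_mk] at this

noncomputable def theta : Module.End ℚ (MvPolynomial (Fin 4) ℚ ⧸ connSumIdeal) where
  toFun := thetaFun
  map_add' x y := by
    obtain ⟨p, rfl⟩ := Ideal.Quotient.mk_surjective x
    obtain ⟨q, rfl⟩ := Ideal.Quotient.mk_surjective y
    rw [← map_add, thetaFun_mk, thetaFun_mk, thetaFun_mk, map_add, map_add]
  map_smul' c x := by
    obtain ⟨p, rfl⟩ := Ideal.Quotient.mk_surjective x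
    show thetaFun (c • Ideal.Quotient.mk connSumIdeal p) =
      c • thetaFun (Ideal.Quotient.mk connSumIdeal p)
    rw [← mk_smul, thetaFun_mk, thetaFun_mk, Derivation.map_smul, mk_smul]

lemma theta_mk (p : MvPolynomial (Fin 4) ℚ) :
    theta (Ideal.Quotient.mk connSumIdeal p) = Ideal.Quotient.mk connSumIdeal (connDer p) :=
  thetaFun_mk p

/-- On `H = ℚ[a,b,α,β]/(a², b², α², β², aα, aβ, bα, bβ, ab − αβ)` (the cohomology of
`(S²×S²) # (S²×S²)`, all generators of degree 2), the assignment `θ(a) = −α`,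
`θ(b) = 0`, `θ(α) = 0`, `θ(β) = b` extends to a well-defined degree-zero derivation,
which is nilpotent and nonzero. -/
theorem stmt_15 :
    ∃ θ : Module.End ℚ (MvPolynomial (Fin 4) ℚ ⧸ connSumIdeal),
      (∀ p q, θ (p * q) = θ p * q + p * θ q) ∧
      θ (Ideal.Quotient.mk connSumIdeal (MvPolynomial.X 0)) =
        - Ideal.Quotient.mk connSumIdeal (MvPolynomial.X 2) ∧
      θ (Ideal.Quotient.mk connSumIdeal (MvPolynomial.X 1)) = 0 ∧
      θ (Ideal.Quotient.mk connSumIdeal (MvPolynomial.X 2)) = 0 ∧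
      θ (Ideal.Quotient.mk connSumIdeal (MvPolynomial.X 3)) =
        Ideal.Quotient.mk connSumIdeal (MvPolynomial.X 1) ∧
      IsNilpotent θ ∧ θ ≠ 0 := by
  refine ⟨theta, ?_, ?_, ?_, ?_, ?_, ?_, ?_⟩
  · intro x y
    obtain ⟨p, rfl⟩ := Ideal.Quotient.mk_surjective x
    obtain ⟨q, rfl⟩ := Ideal.Quotient.mk_surjective y
    rw [← map_mul, theta_mk, theta_mk, theta_mk, connDer_mul, map_add, map_mul, map_mul]
    ring
  · rw [theta_mk, connDer_X0, map_neg]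
  · rw [theta_mk, connDer_X1, map_zero]
  · rw [theta_mk, connDer_X2, map_zero]
  · rw [theta_mk, connDer_X3]
  · refine ⟨2, ?_⟩
    refine LinearMap.ext fun x => ?_
    obtain ⟨p, rfl⟩ := Ideal.Quotient.mk_surjective x
    have : (theta ^ 2) (Ideal.Quotient.mk connSumIdeal p) =
        theta (theta (Ideal.Quotient.mk connSumIdeal p)) := by
      rw [pow_two]; rfl
    rw [this, theta_mk, theta_mk, LinearMap.zero_apply]
    exact (Ideal.Quotient.eq_zero_iff_mem).mpr (connDer_connDer_mem p)
  · intro h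
    have h3 : theta (Ideal.Quotient.mk connSumIdeal (X 3)) = 0 := by rw [h]; exact LinearMap.zero_apply _
    rw [theta_mk, connDer_X3, Ideal.Quotient.eq_zero_iff_mem] at h3
    exact X1_notMem h3
end
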